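/- Let f : ℝ → ℝ be an integrable even function supported in [-1,1] such that f̂(n) ≥ 0 for every nonzero integer n. Then sup_{n∈ℤ} f̂(n + 1/2)·(n + 1/2)² ≥ (2/π²)·∫_{-1}^{1} f(x)·(1 - 3x²) dx. -/

import Mathlib

open MeasureTheory Real

/-- The (real-valued) Fourier transform of an integrable even real function:
`f̂(ξ) = ∫ f(x) cos(2πξx) dx`. -/
noncomputable def realFourier (f : ℝ → ℝ) (ξ : ℝ) : ℝ :=
  ∫ x : ℝ, f x * Real.cos (2 * Real.pi * ξ * x)

lemma bern2_eval (x : ℝ) :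
    (Polynomial.map (algebraMap ℚ ℝ) (Polynomial.bernoulli 2)).eval x = x^2 - x + 1/6 := by
  simp_rw [Polynomial.bernoulli, Finset.sum_range_succ, Finset.sum_range_zero, zero_add,
    Polynomial.map_add, Polynomial.eval_add, Polynomial.map_monomial, Polynomial.eval_monomial]
  norm_num [bernoulli, bernoulli'_zero, bernoulli'_one, bernoulli'_two]
  ring

lemma hasSum_S {x : ℝ} (hx : x ∈ Set.Icc (0:ℝ) 1) :
    HasSum (fun n : ℕ => Real.cos (2*π*n*x) / (n:ℝ)^2) (π^2 * (x^2 - x + 1/6)) := by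
  have h := hasSum_one_div_nat_pow_mul_cos one_ne_zero hx
  rw [show (2*1 = 2) from rfl] at h
  rw [bern2_eval] at h
  convert h using 2 with n
  · rw [one_div, div_eq_inv_mul]
  · norm_num [Nat.factorial]
    ring

lemma summable_aux : Summable (fun n : ℕ => 1/((n:ℝ)+1)^2) := by
  have h2 := hasSum_zeta_two.summable.comp_injective (add_left_injective 1)
  have heq : ((fun n : ℕ => (1:ℝ)/(n:ℝ)^2) ∘ fun x => x + 1) = fun n : ℕ => 1/((n:ℝ)+1)^2 := by
    funext n; simp only [Function.comp]; push_cast; ring_nf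
  rwa [heq] at h2

lemma odd_from_total {f : ℕ → ℝ} {T E : ℝ} (hT : HasSum f T) (hE : HasSum (fun k => f (2*k)) E)
    (ho : Summable fun k => f (2*k+1)) : HasSum (fun k => f (2*k+1)) (T - E) := by
  have h2 := hE.even_add_odd ho.hasSum
  have h3 := hT.unique h2
  have h4 : ∑' k, f (2*k+1) = T - E := by rw [h3]; ring
  exact h4 ▸ ho.hasSum

lemma hasSum_odd {x : ℝ} (hx : x ∈ Set.Icc (0:ℝ) 1) :
    HasSum (fun n : ℕ => Real.cos (π*(2*(n:ℝ)+1)*x) / (2*(n:ℝ)+1)^2) (π^2*(1-2*x)/8) := by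
  have hx2 : x/2 ∈ Set.Icc (0:ℝ) 1 := ⟨by linarith [hx.1], by linarith [hx.2, hx.1]⟩
  have hT : HasSum (fun k : ℕ => Real.cos (π*(k:ℝ)*x) / (k:ℝ)^2)
      (π^2 * ((x/2)^2 - (x/2) + 1/6)) := by
    have h := hasSum_S hx2
    have heq : (fun n : ℕ => Real.cos (2*π*n*(x/2)) / (n:ℝ)^2)
        = fun k : ℕ => Real.cos (π*(k:ℝ)*x) / (k:ℝ)^2 := by
      funext n; rw [show 2*π*(n:ℝ)*(x/2) = π*(n:ℝ)*x by ring]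
    rwa [heq] at h
  have hE : HasSum (fun k : ℕ => Real.cos (π*((2*k:ℕ):ℝ)*x) / ((2*k:ℕ):ℝ)^2)
      ((π^2 * (x^2 - x + 1/6))/4) := by
    have h := (hasSum_S hx).div_const 4
    have heq : (fun n : ℕ => Real.cos (2*π*n*x) / (n:ℝ)^2 / 4)
        = fun k : ℕ => Real.cos (π*((2*k:ℕ):ℝ)*x) / ((2*k:ℕ):ℝ)^2 := by
      funext n
      rw [div_div, show 2*π*(n:ℝ)*x = π*((2*n:ℕ):ℝ)*x by push_cast; ring]
      congr 1
      push_cast; ring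
    rwa [heq] at h
  have ho : Summable fun k : ℕ => Real.cos (π*((2*k+1:ℕ):ℝ)*x) / ((2*k+1:ℕ):ℝ)^2 := by
    apply Summable.of_norm_bounded summable_aux
    intro k
    rw [norm_div, norm_pow, Real.norm_eq_abs (Real.cos _), Real.norm_eq_abs]
    apply div_le_div₀ (by positivity) (Real.abs_cos_le_one _) (by positivity)
    rw [abs_of_nonneg (by positivity : (0:ℝ) ≤ ((2*k+1:ℕ):ℝ))]
    apply pow_le_pow_left₀ (by positivity)
    push_cast; linarith
  have hodd := odd_from_total hT (by exact_mod_cast hE) ho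
  have heq : (fun k : ℕ => Real.cos (π*((2*k+1:ℕ):ℝ)*x) / ((2*k+1:ℕ):ℝ)^2)
      = fun n : ℕ => Real.cos (π*(2*(n:ℝ)+1)*x) / (2*(n:ℝ)+1)^2 := by
    funext n; push_cast; ring_nf
  rw [heq] at hodd
  convert hodd using 1
  ring

lemma hasSum_K {x : ℝ} (hx : x ∈ Set.Icc (-1:ℝ) 1) :
    HasSum (fun n : ℤ => Real.cos (2*π*((n:ℝ)+1/2)*x) / ((n:ℝ)+1/2)^2) (π^2*(1-2*|x|)) := by
  have habs : |x| ∈ Set.Icc (0:ℝ) 1 := ⟨abs_nonneg x, abs_le.mpr ⟨hx.1, hx.2⟩⟩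
  have h1 := (hasSum_odd habs).mul_left 4
  have hcos : ∀ c : ℝ, 0 ≤ c → Real.cos (c*|x|) = Real.cos (c*x) := by
    intro c hc
    rcases abs_cases x with ⟨h,_⟩|⟨h,_⟩
    · rw [h]
    · rw [h, show c*(-x) = -(c*x) by ring, Real.cos_neg]
  have key : ∀ n : ℕ, 4*(Real.cos (π*(2*(n:ℝ)+1)*|x|) / (2*(n:ℝ)+1)^2)
      = Real.cos (2*π*((n:ℝ)+1/2)*x) / ((n:ℝ)+1/2)^2 := by
    intro n
    rw [hcos (π*(2*(n:ℝ)+1)) (by positivity),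
      show π*(2*(n:ℝ)+1)*x = 2*π*((n:ℝ)+1/2)*x by ring,
      show ((n:ℝ)+1/2)^2 = (2*(n:ℝ)+1)^2/4 by ring,
      div_div_eq_mul_div]
    ring
  rw [show π^2*(1-2*|x|) = π^2*(1-2*|x|)/2 + π^2*(1-2*|x|)/2 by ring]
  apply HasSum.of_nat_of_neg_add_one (m := π^2*(1-2*|x|)/2) (m' := π^2*(1-2*|x|)/2)
  · have heq : (fun n : ℕ => 4*(Real.cos (π*(2*(n:ℝ)+1)*|x|) / (2*(n:ℝ)+1)^2))
        = fun n : ℕ => Real.cos (2*π*(((n:ℤ):ℝ)+1/2)*x) / (((n:ℤ):ℝ)+1/2)^2 := by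
      funext n; rw [key n]; norm_num
    rw [← heq]
    convert h1 using 1
    · rfl
    · ring
  · have heq : (fun n : ℕ => 4*(Real.cos (π*(2*(n:ℝ)+1)*|x|) / (2*(n:ℝ)+1)^2))
        = fun n : ℕ => Real.cos (2*π*(((-(n+1):ℤ):ℝ)+1/2)*x) / (((-(n+1):ℤ):ℝ)+1/2)^2 := by
      funext n
      rw [key n]
      rw [show (((-(n+1):ℤ):ℝ)+1/2) = -((n:ℝ)+1/2) by push_cast; ring,
        show 2*π*(-((n:ℝ)+1/2))*x = -(2*π*((n:ℝ)+1/2)*x) by ring, Real.cos_neg, neg_sq]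
    rw [← heq]
    convert h1 using 1
    · rfl
    · ring

lemma hasSum_K0 : HasSum (fun n : ℤ => 1/((n:ℝ)+1/2)^2) (π^2) := by
  have h := hasSum_K (x := 0) (by constructor <;> norm_num)
  simpa using h

lemma hasSum_odd4 : HasSum (fun k : ℕ => 1/(2*(k:ℝ)+1)^4) (π^4/96) := by
  have hT := hasSum_zeta_four
  have hE : HasSum (fun k : ℕ => (1:ℝ)/((2*k:ℕ):ℝ)^4) (π^4/90/16) := by
    have h := hasSum_zeta_four.div_const 16
    have heq : (fun n : ℕ => (1:ℝ)/(n:ℝ)^4/16) = fun k : ℕ => (1:ℝ)/((2*k:ℕ):ℝ)^4 := by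
      funext n; rw [div_div]; congr 1; push_cast; ring
    rwa [heq] at h
  have ho : Summable fun k : ℕ => (1:ℝ)/((2*k+1:ℕ):ℝ)^4 := by
    apply Summable.of_nonneg_of_le (fun k => by positivity) ?_ summable_aux
    intro k
    apply one_div_le_one_div_of_le (by positivity)
    push_cast
    have hk : (0:ℝ) ≤ (k:ℝ) := Nat.cast_nonneg k
    nlinarith [sq_nonneg ((k:ℝ)), sq_nonneg ((2*(k:ℝ)+1)^2 - 1), sq_nonneg (2*(k:ℝ)+1)]
  have h := odd_from_total hT hE ho
  have heq : (fun k : ℕ => (1:ℝ)/((2*k+1:ℕ):ℝ)^4) = fun k : ℕ => 1/(2*(k:ℝ)+1)^4 := by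
    funext k; push_cast; ring
  rw [heq] at h
  convert h using 1
  ring

lemma hasSum_W : HasSum (fun n : ℤ => 1/((n:ℝ)+1/2)^4) (π^4/3) := by
  have h1 := hasSum_odd4.mul_left 16
  have key : ∀ n : ℕ, 16*(1/(2*(n:ℝ)+1)^4) = 1/((n:ℝ)+1/2)^4 := by
    intro n
    have hne : (2*(n:ℝ)+1) ≠ 0 := by positivity
    field_simp
    ring
  rw [show π^4/3 = 16*(π^4/96) + 16*(π^4/96) by ring]
  apply HasSum.of_nat_of_neg_add_one
  · have heq : (fun n : ℕ => 16*(1/(2*(n:ℝ)+1)^4))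
        = fun n : ℕ => 1/(((n:ℤ):ℝ)+1/2)^4 := by
      funext n; rw [key n]; norm_num
    rw [← heq]; exact h1
  · have heq : (fun n : ℕ => 16*(1/(2*(n:ℝ)+1)^4))
        = fun n : ℕ => 1/(((-(n+1):ℤ):ℝ)+1/2)^4 := by
      funext n
      rw [key n, show (((-(n+1):ℤ):ℝ)+1/2) = -((n:ℝ)+1/2) by push_cast; ring]
      rw [show (-((n:ℝ)+1/2))^4 = ((n:ℝ)+1/2)^4 by ring]
    rw [← heq]; exact h1

lemma int_mul_cos {f : ℝ → ℝ} (hf : Integrable f) (ξ : ℝ) :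
    Integrable (fun x => f x * Real.cos (2 * π * ξ * x)) := by
  have h := hf.bdd_mul (g := f) (f := fun x => Real.cos (2*π*ξ*x))
    ((Real.continuous_cos.comp (by continuity)).aestronglyMeasurable)
    (c := 1) (Filter.Eventually.of_forall fun x => by rw [Real.norm_eq_abs]; exact Real.abs_cos_le_one _)
  simpa [mul_comm] using h

lemma integrable_mul_cont {f : ℝ → ℝ} (hf : Integrable f)
    (hsupp : ∀ x : ℝ, x ∉ Set.Icc (-1 : ℝ) 1 → f x = 0) {g : ℝ → ℝ} (hg : Continuous g) :
    Integrable (fun x => f x * g x) := by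
  obtain ⟨C, hC⟩ := (isCompact_Icc (a := (-1:ℝ)) (b := 1)).exists_bound_of_continuousOn
    hg.continuousOn
  have hC0 : 0 ≤ C := le_trans (norm_nonneg _) (hC 0 (by norm_num))
  apply Integrable.mono' (hf.norm.const_mul C)
    (hf.aestronglyMeasurable.mul hg.aestronglyMeasurable)
  filter_upwards with x
  simp only [Pi.mul_apply, norm_mul]
  by_cases hx : x ∈ Set.Icc (-1:ℝ) 1
  · calc ‖f x‖ * ‖g x‖ ≤ ‖f x‖ * C :=
          mul_le_mul_of_nonneg_left (hC x hx) (norm_nonneg _)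
      _ = C * ‖f x‖ := mul_comm _ _
  · rw [hsupp x hx]
    simp [mul_nonneg hC0 (norm_nonneg (f x))]

lemma hhalf (n : ℤ) : ((n:ℝ)+1/2) ≠ 0 := by
  intro h
  have h2 : ((2*n+1 : ℤ) : ℝ) = 0 := by push_cast; linarith
  have h3 : (2*n+1 : ℤ) = 0 := by exact_mod_cast h2
  omega

lemma hasSum_SN {x : ℝ} (hx : x ∈ Set.Icc (-1:ℝ) 1) :
    HasSum (fun m : ℕ => Real.cos (2*π*((m:ℝ)+1)*x) / ((m:ℝ)+1)^2)
      (π^2 * (x^2 - |x| + 1/6)) := by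
  have habs : |x| ∈ Set.Icc (0:ℝ) 1 := ⟨abs_nonneg x, abs_le.mpr ⟨hx.1, hx.2⟩⟩
  have hS := hasSum_S habs
  have h2 : HasSum (fun m : ℕ => Real.cos (2*π*((m+1:ℕ):ℝ)*|x|) / ((m+1:ℕ):ℝ)^2)
      (π^2 * (|x|^2 - |x| + 1/6)) := by
    apply (hasSum_nat_add_iff (f := fun n : ℕ => Real.cos (2*π*(n:ℝ)*|x|) / (n:ℝ)^2) 1).mpr
    convert hS using 1
    · rfl
    · norm_num
  have heq : (fun m : ℕ => Real.cos (2*π*((m+1:ℕ):ℝ)*|x|) / ((m+1:ℕ):ℝ)^2)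
      = fun m : ℕ => Real.cos (2*π*((m:ℝ)+1)*x) / ((m:ℝ)+1)^2 := by
    funext m
    have hc : Real.cos (2*π*((m:ℝ)+1)*|x|) = Real.cos (2*π*((m:ℝ)+1)*x) := by
      rcases abs_cases x with ⟨h,_⟩|⟨h,_⟩
      · rw [h]
      · rw [h, show 2*π*((m:ℝ)+1)*(-x) = -(2*π*((m:ℝ)+1)*x) by ring, Real.cos_neg]
    push_cast
    rw [hc]
  rw [heq] at h2
  convert h2 using 2
  rw [sq_abs]

lemma hasSum_A {f : ℝ → ℝ} (hf : Integrable f)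
    (hsupp : ∀ x : ℝ, x ∉ Set.Icc (-1 : ℝ) 1 → f x = 0) :
    HasSum (fun n : ℤ => (1/((n:ℝ)+1/2)^2) * realFourier f ((n:ℝ)+1/2))
      (∫ x : ℝ, f x * (π^2*(1-2*|x|))) := by
  set F : ℤ → ℝ → ℝ :=
    fun n x => f x * (Real.cos (2*π*((n:ℝ)+1/2)*x) / ((n:ℝ)+1/2)^2) with hF
  have hFint : ∀ n : ℤ, Integrable (F n) := by
    intro n
    have h := (int_mul_cos hf ((n:ℝ)+1/2)).div_const (((n:ℝ)+1/2)^2)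
    simpa [hF, mul_div_assoc] using h
  have hbound : ∀ n : ℤ, ∀ x : ℝ, ‖F n x‖ ≤ 1/((n:ℝ)+1/2)^2 * ‖f x‖ := by
    intro n x
    have hc := hhalf n
    have h1 : ‖F n x‖ = ‖f x‖ * (|Real.cos (2*π*((n:ℝ)+1/2)*x)| / ((n:ℝ)+1/2)^2) := by
      rw [hF]
      simp only [norm_mul, norm_div, Real.norm_eq_abs, abs_pow, sq_abs]
    rw [h1, mul_comm]
    gcongr
    exact Real.abs_cos_le_one _
  have hFs : Summable (fun n : ℤ => ∫ x : ℝ, ‖F n x‖) := by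
    apply Summable.of_nonneg_of_le
      (fun n => integral_nonneg (fun x => norm_nonneg _))
      (fun n => ?_) (hasSum_K0.summable.mul_right (∫ x : ℝ, ‖f x‖))
    calc (∫ x : ℝ, ‖F n x‖) ≤ ∫ x : ℝ, 1/((n:ℝ)+1/2)^2 * ‖f x‖ :=
          integral_mono (hFint n).norm (hf.norm.const_mul _) (hbound n)
      _ = 1/((n:ℝ)+1/2)^2 * ∫ x : ℝ, ‖f x‖ := MeasureTheory.integral_const_mul _ _
  have hmain := hasSum_integral_of_summable_integral_norm hFint hFs
  have h2 : ∀ n : ℤ, (∫ x : ℝ, F n x) = (1/((n:ℝ)+1/2)^2) * realFourier f ((n:ℝ)+1/2) := by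
    intro n
    rw [realFourier, ← MeasureTheory.integral_const_mul]
    congr 1
    funext x
    rw [hF]
    ring
  have h3 : (∫ x : ℝ, ∑' n : ℤ, F n x) = ∫ x : ℝ, f x * (π^2*(1-2*|x|)) := by
    congr 1
    funext x
    by_cases hx : x ∈ Set.Icc (-1:ℝ) 1
    · exact ((hasSum_K hx).mul_left (f x)).tsum_eq
    · simp [hF, hsupp x hx]
  rw [h3] at hmain
  have heq : (fun n : ℤ => ∫ x : ℝ, F n x)
      = fun n : ℤ => (1/((n:ℝ)+1/2)^2) * realFourier f ((n:ℝ)+1/2) := funext h2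
  rwa [heq] at hmain

lemma hasSum_B {f : ℝ → ℝ} (hf : Integrable f)
    (hsupp : ∀ x : ℝ, x ∉ Set.Icc (-1 : ℝ) 1 → f x = 0) :
    HasSum (fun m : ℕ => (1/((m:ℝ)+1)^2) * realFourier f ((m:ℝ)+1))
      (∫ x : ℝ, f x * (π^2*(x^2-|x|+1/6))) := by
  set F : ℕ → ℝ → ℝ :=
    fun m x => f x * (Real.cos (2*π*((m:ℝ)+1)*x) / ((m:ℝ)+1)^2) with hF
  have hFint : ∀ m : ℕ, Integrable (F m) := by
    intro m
    have h := (int_mul_cos hf ((m:ℝ)+1)).div_const (((m:ℝ)+1)^2)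
    simpa [hF, mul_div_assoc] using h
  have hbound : ∀ m : ℕ, ∀ x : ℝ, ‖F m x‖ ≤ 1/((m:ℝ)+1)^2 * ‖f x‖ := by
    intro m x
    have h1 : ‖F m x‖ = ‖f x‖ * (|Real.cos (2*π*((m:ℝ)+1)*x)| / ((m:ℝ)+1)^2) := by
      rw [hF]
      simp only [norm_mul, norm_div, Real.norm_eq_abs, abs_pow, sq_abs]
    rw [h1, mul_comm]
    gcongr
    exact Real.abs_cos_le_one _
  have hFs : Summable (fun m : ℕ => ∫ x : ℝ, ‖F m x‖) := by
    apply Summable.of_nonneg_of_le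
      (fun m => integral_nonneg (fun x => norm_nonneg _))
      (fun m => ?_) (summable_aux.mul_right (∫ x : ℝ, ‖f x‖))
    calc (∫ x : ℝ, ‖F m x‖) ≤ ∫ x : ℝ, 1/((m:ℝ)+1)^2 * ‖f x‖ :=
          integral_mono (hFint m).norm (hf.norm.const_mul _) (hbound m)
      _ = 1/((m:ℝ)+1)^2 * ∫ x : ℝ, ‖f x‖ := MeasureTheory.integral_const_mul _ _
  have hmain := hasSum_integral_of_summable_integral_norm hFint hFs
  have h3 : (∫ x : ℝ, ∑' m : ℕ, F m x) = ∫ x : ℝ, f x * (π^2*(x^2-|x|+1/6)) := by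
    congr 1
    funext x
    by_cases hx : x ∈ Set.Icc (-1:ℝ) 1
    · exact ((hasSum_SN hx).mul_left (f x)).tsum_eq
    · simp [hF, hsupp x hx]
  rw [h3] at hmain
  have heq : (fun m : ℕ => ∫ x : ℝ, F m x)
      = fun m : ℕ => (1/((m:ℝ)+1)^2) * realFourier f ((m:ℝ)+1) := by
    funext m
    rw [realFourier, ← MeasureTheory.integral_const_mul]
    congr 1
    funext x
    rw [hF]
    ring
  rwa [heq] at hmain

theorem triangle_half_integer_inequality
    (f : ℝ → ℝ) (hf : Integrable f)
    (heven : ∀ x : ℝ, f (-x) = f x)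
    (hsupp : ∀ x : ℝ, x ∉ Set.Icc (-1 : ℝ) 1 → f x = 0)
    (hpos : ∀ n : ℤ, n ≠ 0 → 0 ≤ realFourier f n) :
    (((2 / Real.pi ^ 2) * ∫ x in (-1 : ℝ)..1, f x * (1 - 3 * x ^ 2) : ℝ) : EReal) ≤
      ⨆ n : ℤ, ((realFourier f ((n : ℝ) + 1 / 2) * ((n : ℝ) + 1 / 2) ^ 2 : ℝ) : EReal) := by
  have hπ : (π:ℝ) ≠ 0 := Real.pi_ne_zero
  have hA := hasSum_A hf hsupp
  have hB := hasSum_B hf hsupp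
  set J1 := ∫ x : ℝ, f x * (π^2*(1-2*|x|)) with hJ1
  set J2 := ∫ x : ℝ, f x * (π^2*(x^2-|x|+1/6)) with hJ2
  set J3 := ∫ x : ℝ, f x * (1-3*x^2) with hJ3
  have hint3 : Integrable (fun x => f x * (1-3*x^2)) :=
    integrable_mul_cont hf hsupp (by fun_prop)
  have hint1 : Integrable (fun x => f x * (π^2*(1-2*|x|))) :=
    integrable_mul_cont hf hsupp (by fun_prop)
  have hint2 : Integrable (fun x => f x * (π^2*(x^2-|x|+1/6))) :=
    integrable_mul_cont hf hsupp (by fun_prop)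
  have hI3 : (∫ x in (-1:ℝ)..1, f x * (1 - 3 * x ^ 2)) = J3 := by
    rw [intervalIntegral.integral_of_le (by norm_num : (-1:ℝ) ≤ 1),
      ← MeasureTheory.integral_Icc_eq_integral_Ioc]
    exact setIntegral_eq_integral_of_forall_compl_eq_zero
      (fun x hx => by rw [hsupp x hx, zero_mul])
  have key : 3/π^4 * J1 = 2/π^2 * J3 + 6/π^4 * J2 := by
    rw [hJ1, hJ2, hJ3, ← MeasureTheory.integral_const_mul, ← MeasureTheory.integral_const_mul,
      ← MeasureTheory.integral_const_mul, ← integral_add (hint3.const_mul _) (hint2.const_mul _)]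
    congr 1
    funext x
    field_simp
    ring
  have hBpos : 0 ≤ J2 := by
    rw [← hB.tsum_eq]
    apply tsum_nonneg
    intro m
    apply mul_nonneg (by positivity)
    have h := hpos ((m:ℤ)+1) (by omega)
    rwa [show ((((m:ℤ)+1 : ℤ)):ℝ) = (m:ℝ)+1 by push_cast; ring] at h
  by_cases htop : (⨆ n : ℤ, ((realFourier f ((n : ℝ) + 1 / 2) * ((n : ℝ) + 1 / 2) ^ 2 : ℝ) : EReal)) = ⊤
  · rw [htop]; exact le_top
  have hub : ∀ n : ℤ, ((realFourier f ((n : ℝ) + 1 / 2) * ((n : ℝ) + 1 / 2) ^ 2 : ℝ) : EReal) ≤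
      ⨆ n : ℤ, ((realFourier f ((n : ℝ) + 1 / 2) * ((n : ℝ) + 1 / 2) ^ 2 : ℝ) : EReal) :=
    fun n => le_iSup (fun n : ℤ =>
      ((realFourier f ((n : ℝ) + 1 / 2) * ((n : ℝ) + 1 / 2) ^ 2 : ℝ) : EReal)) n
  have hbot : (⨆ n : ℤ, ((realFourier f ((n : ℝ) + 1 / 2) * ((n : ℝ) + 1 / 2) ^ 2 : ℝ) : EReal)) ≠ ⊥ := by
    intro h
    have h0 := hub 0
    rw [h, le_bot_iff] at h0
    exact EReal.coe_ne_bot _ h0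
  set r := (⨆ n : ℤ, ((realFourier f ((n : ℝ) + 1 / 2) * ((n : ℝ) + 1 / 2) ^ 2 : ℝ) : EReal)).toReal with hr
  have hSr : (⨆ n : ℤ, ((realFourier f ((n : ℝ) + 1 / 2) * ((n : ℝ) + 1 / 2) ^ 2 : ℝ) : EReal))
      = ((r:ℝ) : EReal) := (EReal.coe_toReal htop hbot).symm
  have hXr : ∀ n : ℤ, realFourier f ((n:ℝ)+1/2) * ((n:ℝ)+1/2)^2 ≤ r := by
    intro n
    have h := hub n
    rw [hSr] at h
    exact_mod_cast h
  rw [hSr]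
  apply EReal.coe_le_coe_iff.mpr
  -- real inequality
  have hW1 : HasSum (fun n : ℤ => 3/π^4 * (1/((n:ℝ)+1/2)^4)) 1 := by
    have h := hasSum_W.mul_left (3/π^4)
    convert h using 1
    · rfl
    · field_simp
  have hAsum := hA.mul_left (3/π^4)
  have hterm : (fun n : ℤ => 3/π^4 * ((1/((n:ℝ)+1/2)^2) * realFourier f ((n:ℝ)+1/2)))
      = fun n : ℤ => (3/π^4 * (1/((n:ℝ)+1/2)^4)) * (realFourier f ((n:ℝ)+1/2) * ((n:ℝ)+1/2)^2) := by
    funext n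
    have hgen : ∀ (c F : ℝ), c ≠ 0 → 3/π^4 * ((1/c) * F) = (3/π^4*(1/c^2))*(F*c) := by
      intro c F hc
      field_simp
    rw [show ((n:ℝ)+1/2)^4 = (((n:ℝ)+1/2)^2)^2 by ring]
    exact hgen _ _ (pow_ne_zero _ (hhalf n))
  rw [hterm] at hAsum
  have hle : 3/π^4 * J1 ≤ r := by
    calc 3/π^4 * J1 = ∑' n : ℤ, (3/π^4 * (1/((n:ℝ)+1/2)^4)) *
          (realFourier f ((n:ℝ)+1/2) * ((n:ℝ)+1/2)^2) := hAsum.tsum_eq.symm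
      _ ≤ ∑' n : ℤ, (3/π^4 * (1/((n:ℝ)+1/2)^4)) * r := by
          apply Summable.tsum_le_tsum ?_ hAsum.summable (hW1.mul_right r).summable
          intro n
          exact mul_le_mul_of_nonneg_left (hXr n) (by positivity)
      _ = 1 * r := (hW1.mul_right r).tsum_eq
      _ = r := one_mul r
  rw [hI3]
  have h64 : 0 ≤ 6/π^4 * J2 := mul_nonneg (by positivity) hBpos
  linarith [key, hle, h64]
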